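/- arXiv:2505.07466 — 2 statements merged into one kernel-verified Lean document; each statement's English description precedes it below -/
import Mathlib

section
/- Second step of the singular-part recursion, case 1: assume A = Φ * Ψ in AddMonoidAlgebra ℝ ℝ with data as in the context and N ≥ 2, L ≥ 2, K ≥ 2. If β₂ ≠ ζ₁ + κ₂, then β₂ = ζ₂ + κ₁ and α₂ = φ₂·ψ₁; equivalently, ζ₂ = β₂ − κ₁ and φ₂ = α₂/ψ₁. -/
/-- Second step of the singular-part recursion, case 1: if `A = Φ * Ψ` with the
leaf-peeling singular data and `β₂ ≠ ζ₁ + κ₂`, then `β₂ = ζ₂ + κ₁` and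
`α₂ = φ₂·ψ₁`; equivalently, `ζ₂ = β₂ − κ₁` and `φ₂ = α₂ / ψ₁`. -/
theorem singular_recursion_second_step_case1
    (N L K : ℕ) (hN : 2 ≤ N) (hL : 2 ≤ L) (hK : 2 ≤ K)
    (β : Fin N → ℝ) (ζ : Fin L → ℝ) (κ : Fin K → ℝ)
    (hβ : StrictMono β) (hζ : StrictMono ζ) (hκ : StrictMono κ)
    (α : Fin N → ℝ) (φ : Fin L → ℝ) (ψ : Fin K → ℝ)
    (hα : ∀ n, α n ≠ 0) (hφ : ∀ l, 0 < φ l) (hψ : ∀ k, 0 < ψ k)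
    (A Φ Ψ : AddMonoidAlgebra ℝ ℝ)
    (hA : A = ∑ n, AddMonoidAlgebra.single (β n) (α n))
    (hΦ : Φ = ∑ l, AddMonoidAlgebra.single (ζ l) (φ l))
    (hΨ : Ψ = ∑ k, AddMonoidAlgebra.single (κ k) (ψ k))
    (hSing : A = Φ * Ψ)
    (hcase : β ⟨1, hN⟩ ≠ ζ ⟨0, by omega⟩ + κ ⟨1, hK⟩) :
    β ⟨1, hN⟩ = ζ ⟨1, hL⟩ + κ ⟨0, by omega⟩ ∧
      α ⟨1, hN⟩ = φ ⟨1, hL⟩ * ψ ⟨0, by omega⟩ ∧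
      ζ ⟨1, hL⟩ = β ⟨1, hN⟩ - κ ⟨0, by omega⟩ ∧
      φ ⟨1, hL⟩ = α ⟨1, hN⟩ / ψ ⟨0, by omega⟩ := by
  have hN0 : 0 < N := by omega
  have hL0 : 0 < L := by omega
  have hK0 : 0 < K := by omega
  set i0 : Fin N := ⟨0, by omega⟩ with hi0
  set i1 : Fin N := ⟨1, hN⟩ with hi1
  set l0 : Fin L := ⟨0, by omega⟩ with hl0
  set l1 : Fin L := ⟨1, hL⟩ with hl1
  set k0 : Fin K := ⟨0, by omega⟩ with hk0
  set k1 : Fin K := ⟨1, hK⟩ with hk1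
  rw [hA, hΦ, hΨ, Finset.sum_mul_sum] at hSing
  simp only [AddMonoidAlgebra.single_mul_single] at hSing
  have hS2 : (∑ n, Finsupp.single (β n) (α n) : ℝ →₀ ℝ)
      = ∑ l, ∑ k, Finsupp.single (ζ l + κ k) (φ l * ψ k) := by
    have h := congrArg AddMonoidAlgebra.coeffAddEquiv hSing
    simpa only [map_sum, AddMonoidAlgebra.coeffAddEquiv_apply, AddMonoidAlgebra.coeff_single] using h
  have key : ∀ x : ℝ, (∑ n, if β n = x then α n else 0)
      = ∑ l, ∑ k, if ζ l + κ k = x then φ l * ψ k else 0 := by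
    intro x
    have h := Finsupp.ext_iff.mp hS2 x
    simp only [Finsupp.finset_sum_apply, Finsupp.single_apply] at h
    refine h.trans (Finset.sum_congr rfl fun l _ => Finset.sum_congr rfl fun k _ => ?_)
    split <;> simp_all
  -- evaluation of the left side at β n
  have fval : ∀ n : Fin N, (∑ m, if β m = β n then α m else 0) = α n := by
    intro n
    simp [hβ.injective.eq_iff]
  -- nonnegativity of terms
  have tnn : ∀ (l : Fin L) (k : Fin K) (x : ℝ),
      0 ≤ (if ζ l + κ k = x then φ l * ψ k else 0) := by
    intro l k x
    split
    · exact le_of_lt (mul_pos (hφ l) (hψ k))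
    · exact le_rfl
  -- every product point is a β point
  have hB : ∀ (l : Fin L) (k : Fin K), ∃ n, β n = ζ l + κ k := by
    intro l k
    by_contra hno
    push_neg at hno
    have h0 : (∑ n, if β n = ζ l + κ k then α n else 0) = 0 := by
      apply Finset.sum_eq_zero
      intro n _
      simp [hno n]
    have hge : φ l * ψ k ≤ ∑ l', ∑ k', if ζ l' + κ k' = ζ l + κ k then φ l' * ψ k' else 0 := by
      calc φ l * ψ k = (if ζ l + κ k = ζ l + κ k then φ l * ψ k else 0) := by simp
        _ ≤ ∑ k', if ζ l + κ k' = ζ l + κ k then φ l * ψ k' else 0 :=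
            Finset.single_le_sum (fun k' _ => tnn l k' _) (Finset.mem_univ k)
        _ ≤ ∑ l', ∑ k', if ζ l' + κ k' = ζ l + κ k then φ l' * ψ k' else 0 :=
            Finset.single_le_sum
              (fun l' _ => Finset.sum_nonneg fun k' _ => tnn l' k' _) (Finset.mem_univ l)
    rw [← key, h0] at hge
    exact absurd hge (not_le.mpr (mul_pos (hφ l) (hψ k)))
  -- every β point is a product point
  have hC : ∀ n : Fin N, ∃ l k, ζ l + κ k = β n := by
    intro n
    by_contra hno
    push_neg at hno
    have h0 : (∑ l, ∑ k, if ζ l + κ k = β n then φ l * ψ k else 0) = 0 := by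
      apply Finset.sum_eq_zero
      intro l _
      apply Finset.sum_eq_zero
      intro k _
      simp [hno l k]
    have := key (β n)
    rw [h0, fval n] at this
    exact hα n this
  have hmono : ∀ n : Fin N, β i0 ≤ β n := fun n => hβ.monotone (by simp [hi0, Fin.le_def])
  -- β 0 = ζ 0 + κ 0
  have hβ0 : β i0 = ζ l0 + κ k0 := by
    obtain ⟨l, k, h⟩ := hC i0
    obtain ⟨n, hn⟩ := hB l0 k0
    have h1 : β i0 ≤ ζ l0 + κ k0 := hn ▸ hmono n
    have h2 : ζ l0 + κ k0 ≤ β i0 := by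
      rw [← h]
      exact add_le_add (hζ.monotone (by simp [hl0, Fin.le_def]))
        (hκ.monotone (by simp [hk0, Fin.le_def]))
    linarith
  -- anything strictly above β 0 in the β range is ≥ β 1
  have hsecond : ∀ n : Fin N, β i0 < β n → β i1 ≤ β n := by
    intro n hn
    apply hβ.monotone
    have : i0 ≠ n := fun h => by rw [h] at hn; exact lt_irrefl _ hn
    rw [Fin.le_def]
    simp only [hi1]
    have := Fin.val_ne_of_ne this
    simp [hi0] at this
    omega
  have hζ01 : ζ l0 < ζ l1 := hζ (by simp [hl0, hl1, Fin.lt_def])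
  have hκ01 : κ k0 < κ k1 := hκ (by simp [hk0, hk1, Fin.lt_def])
  have hge10 : β i1 ≤ ζ l1 + κ k0 := by
    obtain ⟨n, hn⟩ := hB l1 k0
    rw [← hn]
    apply hsecond
    rw [hn, hβ0]
    linarith
  have hge01 : β i1 ≤ ζ l0 + κ k1 := by
    obtain ⟨n, hn⟩ := hB l0 k1
    rw [← hn]
    apply hsecond
    rw [hn, hβ0]
    linarith
  -- the main location identity
  have hstep : β i1 = ζ l1 + κ k0 := by
    obtain ⟨l, k, h⟩ := hC i1
    rcases Nat.eq_zero_or_pos l.val with hlv | hlv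
    · -- l = l0
      have hll : l = l0 := by simp [hl0, Fin.ext_iff, hlv]
      subst hll
      rcases Nat.eq_zero_or_pos k.val with hkv | hkv
      · have hkk : k = k0 := by simp [hk0, Fin.ext_iff, hkv]
        subst hkk
        rw [← hβ0] at h
        have : i1 = i0 := hβ.injective h.symm
        simp [hi0, hi1, Fin.ext_iff] at this
      · have hk1le : κ k1 ≤ κ k := hκ.monotone (by simp [hk1, Fin.le_def]; omega)
        have : β i1 = ζ l0 + κ k1 := by linarith
        exact absurd this hcase
    · have hl1le : ζ l1 ≤ ζ l := hζ.monotone (by simp [hl1, Fin.le_def]; omega)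
      have hk0le : κ k0 ≤ κ k := hκ.monotone (by simp [hk0, Fin.le_def])
      linarith
  have hlt : ζ l1 + κ k0 < ζ l0 + κ k1 := by
    rcases lt_or_eq_of_le (hstep ▸ hge01) with h | h
    · linarith [hstep ▸ h]
    · exact absurd (hstep.symm ▸ h.symm ▸ rfl : β i1 = ζ l0 + κ k1) hcase
  -- coefficient identity
  have hcoef : α i1 = φ l1 * ψ k0 := by
    have h := key (β i1)
    rw [fval i1, hstep] at h
    rw [h]
    rw [Finset.sum_eq_single_of_mem l1 (Finset.mem_univ l1)]
    · rw [Finset.sum_eq_single_of_mem k0 (Finset.mem_univ k0)]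
      · simp
      · intro k _ hkne
        have : κ k ≠ κ k0 := fun hh => hkne (hκ.injective hh)
        simp only [add_right_inj] at *
        simp [this]
    · intro l _ hlne
      apply Finset.sum_eq_zero
      intro k _
      have hne : ζ l + κ k ≠ ζ l1 + κ k0 := by
        rcases Nat.eq_zero_or_pos l.val with hlv | hlv
        · have hll : l = l0 := by simp [hl0, Fin.ext_iff, hlv]
          subst hll
          intro hh
          have hκgt : κ k0 < κ k := by linarith
          have hknz : k ≠ k0 := fun e => by rw [e] at hκgt; exact lt_irrefl _ hκgt
          have hk1le : κ k1 ≤ κ k := by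
            apply hκ.monotone
            rw [Fin.le_def]
            have := Fin.val_ne_of_ne hknz
            simp [hk0] at this
            simp [hk1]; omega
          linarith
        · have hlv1 : 1 < l.val := by
            rcases Nat.lt_or_ge l.val 2 with h2 | h2
            · exfalso; apply hlne; simp [hl1, Fin.ext_iff]; omega
            · omega
          have : ζ l1 < ζ l := hζ (by simp [hl1, Fin.lt_def]; omega)
          have hk0le : κ k0 ≤ κ k := hκ.monotone (by simp [hk0, Fin.le_def])
          intro hh
          linarith
      simp [hne]
  refine ⟨hstep, hcoef, by linarith, ?_⟩
  rw [hcoef]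
  field_simp [ne_of_gt (hψ k0)]
end

section
/- General step of the singular-part recursion: assume A = Φ * Ψ in AddMonoidAlgebra ℝ ℝ with data as in the context. Then for every p with 1 ≤ p < L, the set S_p = { x ∈ supp A : A(x) ≠ Σ_{l=1}^p φₗ·Ψ(x − ζₗ) } is nonempty, its minimum satisfies min S_p = ζ_{p+1} + κ₁, and φ_{p+1} = ( A(ζ_{p+1}+κ₁) − Σ_{l=1}^p φₗ·Ψ(ζ_{p+1}+κ₁−ζₗ) ) / ψ₁. Hence, knowing {αₙ, βₙ}, {ψₖ, κₖ} and the already recovered pairs {φₗ, ζₗ}_{l=1}^p, one recovers {φ_{p+1}, ζ_{p+1}}, and by induction all pairs {φₗ, ζₗ}_{l=1}^L. -/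
/-- General step of the singular-part recursion: with the leaf-peeling singular
data and `A = Φ * Ψ`, for every `p` with `1 ≤ p < L` (so that the zero-based
pairs `(φ₀,ζ₀),…,(φ_{p-1},ζ_{p-1})` are "already recovered"), the set
`S_p = { x ∈ supp A : A(x) ≠ Σ_{l<p} φₗ·Ψ(x − ζₗ) }` is nonempty, its least
element is `ζ_{p+1} + κ₁` (zero-based: `ζ p + κ 0`), and
`φ_{p+1} = (A(ζ_{p+1}+κ₁) − Σ_{l≤p} φₗ Ψ(ζ_{p+1}+κ₁−ζₗ)) / ψ₁`. -/
theorem singular_recursion_general_step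
    (N L K : ℕ) (hN : 0 < N) (hL : 0 < L) (hK : 0 < K)
    (β : Fin N → ℝ) (ζ : Fin L → ℝ) (κ : Fin K → ℝ)
    (hβ : StrictMono β) (hζ : StrictMono ζ) (hκ : StrictMono κ)
    (α : Fin N → ℝ) (φ : Fin L → ℝ) (ψ : Fin K → ℝ)
    (hα : ∀ n, α n ≠ 0) (hφ : ∀ l, 0 < φ l) (hψ : ∀ k, 0 < ψ k)
    (A Φ Ψ : AddMonoidAlgebra ℝ ℝ)
    (hA : A = ∑ n, AddMonoidAlgebra.single (β n) (α n))
    (hΦ : Φ = ∑ l, AddMonoidAlgebra.single (ζ l) (φ l))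
    (hΨ : Ψ = ∑ k, AddMonoidAlgebra.single (κ k) (ψ k))
    (hSing : A = Φ * Ψ)
    (p : ℕ) (hp1 : 1 ≤ p) (hpL : p < L) :
    (({x : ℝ | x ∈ A.coeff.support ∧
        A.coeff x ≠ ∑ l ∈ Finset.univ.filter (fun l : Fin L => (l : ℕ) < p),
          φ l * Ψ.coeff (x - ζ l)} : Set ℝ).Nonempty) ∧
    IsLeast {x : ℝ | x ∈ A.coeff.support ∧
        A.coeff x ≠ ∑ l ∈ Finset.univ.filter (fun l : Fin L => (l : ℕ) < p),
          φ l * Ψ.coeff (x - ζ l)}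
      (ζ ⟨p, hpL⟩ + κ ⟨0, hK⟩) ∧
    φ ⟨p, hpL⟩ =
      (A.coeff (ζ ⟨p, hpL⟩ + κ ⟨0, hK⟩) -
        ∑ l ∈ Finset.univ.filter (fun l : Fin L => (l : ℕ) < p),
          φ l * Ψ.coeff (ζ ⟨p, hpL⟩ + κ ⟨0, hK⟩ - ζ l)) / ψ ⟨0, hK⟩ := by
  classical
  set P : Fin L := ⟨p, hpL⟩ with hP
  set k0 : Fin K := ⟨0, hK⟩ with hk0
  set z : ℝ := ζ P + κ k0 with hz
  have hΨapp : ∀ y, Ψ.coeff y = ∑ k, if κ k = y then ψ k else 0 := by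
    intro y; rw [hΨ, AddMonoidAlgebra.coeff_sum, Finsupp.finset_sum_apply]
    exact Finset.sum_congr rfl fun k _ => Finsupp.single_apply
  have hΨnonneg : ∀ y, 0 ≤ Ψ.coeff y := by
    intro y; rw [hΨapp]
    exact Finset.sum_nonneg fun k _ => by split_ifs; exacts [(hψ k).le, le_refl 0]
  have hΨzero : ∀ y, y < κ k0 → Ψ.coeff y = 0 := by
    intro y hy; rw [hΨapp]
    refine Finset.sum_eq_zero fun k _ => if_neg fun h => ?_
    have : κ k0 ≤ κ k := hκ.monotone (Fin.mk_le_of_le_val (Nat.zero_le _))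
    exact absurd (h ▸ this) (not_le.mpr hy)
  have hΨat : ∀ j, Ψ.coeff (κ j) = ψ j := by
    intro j; rw [hΨapp, Finset.sum_eq_single j]
    · rw [if_pos rfl]
    · intro k _ hk; exact if_neg fun h => hk (hκ.injective h)
    · intro h; exact absurd (Finset.mem_univ j) h
  have hΨsupp : ∀ y, Ψ.coeff y ≠ 0 → ∃ k, y = κ k := by
    intro y hy
    by_contra h; push_neg at h
    exact hy ((hΨapp y).trans (Finset.sum_eq_zero fun k _ => if_neg fun hk => h k hk.symm))
  have hAapp : ∀ x, A.coeff x = ∑ l, φ l * Ψ.coeff (x - ζ l) := by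
    intro x
    rw [hSing, hΦ, Finset.sum_mul, AddMonoidAlgebra.coeff_sum, Finsupp.finset_sum_apply]
    refine Finset.sum_congr rfl fun l _ => ?_
    rw [AddMonoidAlgebra.coeff_single_mul_apply, neg_add_eq_sub]
  set F : ℝ → ℝ := fun x => ∑ l ∈ Finset.univ.filter (fun l : Fin L => (l : ℕ) < p),
      φ l * Ψ.coeff (x - ζ l) with hF
  set G : ℝ → ℝ := fun x => ∑ l ∈ Finset.univ.filter (fun l : Fin L => ¬ (l : ℕ) < p),
      φ l * Ψ.coeff (x - ζ l) with hG
  have hsplit : ∀ x, A.coeff x = F x + G x := by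
    intro x
    rw [hAapp, hF, hG]
    exact (Finset.sum_filter_add_sum_filter_not _ _ _).symm
  have hFnonneg : ∀ x, 0 ≤ F x :=
    fun x => Finset.sum_nonneg fun l _ => mul_nonneg (hφ l).le (hΨnonneg _)
  have hGnonneg : ∀ x, 0 ≤ G x :=
    fun x => Finset.sum_nonneg fun l _ => mul_nonneg (hφ l).le (hΨnonneg _)
  have hmem : ∀ x, (x ∈ A.coeff.support ∧ A.coeff x ≠ F x) ↔ G x ≠ 0 := by
    intro x
    constructor
    · rintro ⟨_, hne⟩ hG0
      exact hne (by rw [hsplit x, hG0, add_zero])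
    · intro hG0
      have hGpos : 0 < G x := lt_of_le_of_ne (hGnonneg x) (Ne.symm hG0)
      have hApos : 0 < A.coeff x := by rw [hsplit]; linarith [hFnonneg x]
      refine ⟨Finsupp.mem_support_iff.mpr hApos.ne', ?_⟩
      rw [hsplit]; intro h; nlinarith
  have hPmem : P ∈ Finset.univ.filter (fun l : Fin L => ¬ (l : ℕ) < p) := by
    simp [hP]
  have hGz : G z = φ P * ψ k0 := by
    show (∑ l ∈ Finset.univ.filter (fun l : Fin L => ¬ (l : ℕ) < p),
        φ l * Ψ.coeff (z - ζ l)) = φ P * ψ k0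
    rw [Finset.sum_eq_single P]
    · have : z - ζ P = κ k0 := by rw [hz]; ring
      rw [this, hΨat]
    · intro l hl hne
      have hlp : p ≤ (l : ℕ) := not_lt.mp (Finset.mem_filter.mp hl).2
      have hPl : P < l := lt_of_le_of_ne (Fin.mk_le_of_le_val hlp) (Ne.symm hne)
      have hzl : z - ζ l < κ k0 := by
        have := hζ hPl
        rw [hz]; linarith
      rw [hΨzero _ hzl, mul_zero]
    · intro h; exact absurd hPmem h
  have hGzpos : 0 < G z := hGz ▸ mul_pos (hφ P) (hψ k0)
  have hzS : z ∈ {x : ℝ | x ∈ A.coeff.support ∧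
      A.coeff x ≠ ∑ l ∈ Finset.univ.filter (fun l : Fin L => (l : ℕ) < p),
        φ l * Ψ.coeff (x - ζ l)} := (hmem z).mpr hGzpos.ne'
  have hlb : ∀ x ∈ {x : ℝ | x ∈ A.coeff.support ∧
      A.coeff x ≠ ∑ l ∈ Finset.univ.filter (fun l : Fin L => (l : ℕ) < p),
        φ l * Ψ.coeff (x - ζ l)}, z ≤ x := by
    intro x hx
    have hGx : G x ≠ 0 := (hmem x).mp hx
    obtain ⟨l, hl, hlne⟩ := Finset.exists_ne_zero_of_sum_ne_zero hGx
    have hΨne : Ψ.coeff (x - ζ l) ≠ 0 := fun h => hlne (by rw [h, mul_zero])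
    obtain ⟨k, hk⟩ := hΨsupp _ hΨne
    have hxeq : x = ζ l + κ k := by linarith [hk]
    have h1 : ζ P ≤ ζ l :=
      hζ.monotone (Fin.mk_le_of_le_val (not_lt.mp (Finset.mem_filter.mp hl).2))
    have h2 : κ k0 ≤ κ k := hκ.monotone (Fin.mk_le_of_le_val (Nat.zero_le _))
    rw [hz, hxeq]; linarith
  refine ⟨⟨z, hzS⟩, ⟨hzS, hlb⟩, ?_⟩
  have : A.coeff z - F z = φ P * ψ k0 := by rw [hsplit z, hGz]; ring
  rw [show (∑ l ∈ Finset.univ.filter (fun l : Fin L => (l : ℕ) < p),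
      φ l * Ψ.coeff (ζ ⟨p, hpL⟩ + κ ⟨0, hK⟩ - ζ l)) = F z from rfl]
  rw [show A.coeff (ζ ⟨p, hpL⟩ + κ ⟨0, hK⟩) = A.coeff z from rfl, this]
  rw [mul_div_assoc, div_self (hψ k0).ne', mul_one]
end
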